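/- Let L be a model satisfying A1–A6. For each α < κ, the set L|_α = {x|_α : x ∈ L}, with the order inherited from L, is a complete lattice in which the infimum of X ⊆ L|_α is (⨅ X)|_α and the supremum is (⨆ X)|_α, where ⨅ X and ⨆ X are taken in L. -/

import Mathlib

/-- in a model (A1–A6), for each α < κ the set
L|_α = {x|_α : x ∈ L} with the inherited order is a complete lattice whose infima
are (⨅ X)|_α and suprema are (⨆ X)|_α (infima/suprema taken in L). -/
theorem restricted_lattice_complete
    {κ : Ordinal} (hκ : Order.IsSuccLimit κ) {L : Type*} [CompleteLattice L]
    (r : Ordinal → L → L → Prop)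
    (hrefl : ∀ α < κ, ∀ x : L, r α x x)
    (htrans : ∀ α < κ, ∀ x y z : L, r α x y → r α y z → r α x z)
    (A1 : ∀ α β : Ordinal, α < β → β < κ → ∀ x y : L, r β x y → r α x y ∧ r α y x)
    (A2 : ∀ x y : L, (∀ α < κ, r α x y ∧ r α y x) → x = y)
    (res : Ordinal → L → L)
    (A3 : ∀ α < κ, ∀ x : L, (r α x (res α x) ∧ r α (res α x) x) ∧
        ∀ z : L, r α x z → res α x ≤ z)
    (A4 : ∀ α < κ, ∀ (X : Set L) (y : L), X.Nonempty →
        (∀ x ∈ X, r α x y ∧ r α y x) → r α (sSup X) y ∧ r α y (sSup X))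
    (A5 : ∀ α < κ, ∀ x y : L, x ≤ y → res α x ≤ res α y)
    (A6 : ∀ α < κ, ∀ x y : L, x ≤ y → (∀ β < α, r β x y ∧ r β y x) → r α x y) :
    ∀ α < κ, ∀ X ⊆ Set.range (res α),
      res α (sInf X) ∈ Set.range (res α) ∧
      (∀ x ∈ X, res α (sInf X) ≤ x) ∧
      (∀ z ∈ Set.range (res α), (∀ x ∈ X, z ≤ x) → z ≤ res α (sInf X)) ∧
      res α (sSup X) ∈ Set.range (res α) ∧
      (∀ x ∈ X, x ≤ res α (sSup X)) ∧
      (∀ z ∈ Set.range (res α), (∀ x ∈ X, x ≤ z) → res α (sSup X) ≤ z) := by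
  intro α hα X hX
  have idem : ∀ y : L, res α (res α y) = res α y := by
    intro y
    have h1 : res α (res α y) ≤ res α y :=
      (A3 α hα (res α y)).2 (res α y) (hrefl α hα (res α y))
    have h2 : res α y ≤ res α (res α y) :=
      (A3 α hα y).2 _ (htrans α hα _ _ _ (A3 α hα y).1.1 (A3 α hα (res α y)).1.1)
    exact le_antisymm h1 h2
  have fix : ∀ x ∈ X, res α x = x := by
    intro x hx
    obtain ⟨y, rfl⟩ := hX hx
    exact idem y
  refine ⟨⟨_, rfl⟩, ?_, ?_, ⟨_, rfl⟩, ?_, ?_⟩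
  · intro x hx
    calc res α (sInf X) ≤ res α x := A5 α hα _ _ (sInf_le hx)
    _ = x := fix x hx
  · intro z hz hlb
    obtain ⟨y, rfl⟩ := hz
    calc res α y = res α (res α y) := (idem y).symm
    _ ≤ res α (sInf X) := A5 α hα _ _ (le_sInf hlb)
  · intro x hx
    calc x = res α x := (fix x hx).symm
    _ ≤ res α (sSup X) := A5 α hα _ _ (le_sSup hx)
  · intro z hz hub
    obtain ⟨y, rfl⟩ := hz
    calc res α (sSup X) ≤ res α (res α y) := A5 α hα _ _ (sSup_le hub)
    _ = res α y := idem y
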